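/- The skew Clifford algebra sCl(μ, B) is a finite-dimensional 𝕜-vector space, and its dimension is at most 2^n. (Lemma 3.1: the images of 1 and of the products x̄_{i_1} x̄_{i_2} ⋯ x̄_{i_k} with i_1 < i_2 < ⋯ < i_k span sCl(μ, B).) -/

import Mathlib

open FreeAlgebra

/-- `μ` is multiplicatively antisymmetric: `μ i j * μ j i = 1` and `μ i i = 1`. -/
def MulAntisym {𝕜 : Type*} [Field 𝕜] {n : ℕ} (μ : Fin n → Fin n → 𝕜) : Prop :=
  ∀ i j, μ i j * μ j i = 1 ∧ μ i i = 1

/-- `B` is `μ`-symmetric: `B i j = μ i j * B j i`. -/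
def MuSymm {𝕜 : Type*} [Field 𝕜] {n : ℕ} (μ B : Fin n → Fin n → 𝕜) : Prop :=
  ∀ i j, B i j = μ i j * B j i

/-- Condition (★): for all `i, j` with `B i j ≠ 0`, one has `μ i k = μ k j` for all `k`. -/
def StarCond {𝕜 : Type*} [Field 𝕜] {n : ℕ} (μ B : Fin n → Fin n → 𝕜) : Prop :=
  ∀ i j, B i j ≠ 0 → ∀ k, μ i k = μ k j

/-- The defining relations of the skew Clifford algebra: identifying
`x_i x_j + μ i j • (x_j x_i)` with `(2 * B i j) • 1`, which amounts to quotienting the free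
algebra by the two-sided ideal generated by
`x_i x_j + μ i j • (x_j x_i) - (2 * B i j) • 1`. -/
inductive sClRel (𝕜 : Type*) [Field 𝕜] (n : ℕ) (μ B : Fin n → Fin n → 𝕜) :
    FreeAlgebra 𝕜 (Fin n) → FreeAlgebra 𝕜 (Fin n) → Prop
  | rel (i j : Fin n) : sClRel 𝕜 n μ B
      (ι 𝕜 i * ι 𝕜 j + μ i j • (ι 𝕜 j * ι 𝕜 i))
      ((2 * B i j) • (1 : FreeAlgebra 𝕜 (Fin n)))

/-- The skew Clifford algebra `sCl(μ, B)`. -/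
abbrev sCl (𝕜 : Type*) [Field 𝕜] (n : ℕ) (μ B : Fin n → Fin n → 𝕜) : Type _ :=
  RingQuot (sClRel 𝕜 n μ B)

/-- The image `x̄_i` of the generator `x_i` in the skew Clifford algebra. -/
noncomputable def sClGen (𝕜 : Type*) [Field 𝕜] (n : ℕ) (μ B : Fin n → Fin n → 𝕜)
    (i : Fin n) : sCl 𝕜 n μ B :=
  RingQuot.mkAlgHom 𝕜 (sClRel 𝕜 n μ B) (ι 𝕜 i)
section Aux

variable {𝕜 : Type*} [Field 𝕜] {n : ℕ} (μ B : Fin n → Fin n → 𝕜)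

/-- The monomial `x̄_{i₁} ⋯ x̄_{i_k}` attached to a finite set `{i₁ < ⋯ < i_k}`. -/
noncomputable def sClMon (s : Finset (Fin n)) : sCl 𝕜 n μ B :=
  ((s.sort (· ≤ ·)).map (sClGen 𝕜 n μ B)).prod

lemma sCl_rel (i j : Fin n) :
    sClGen 𝕜 n μ B i * sClGen 𝕜 n μ B j
      + μ i j • (sClGen 𝕜 n μ B j * sClGen 𝕜 n μ B i)
      = (2 * B i j) • (1 : sCl 𝕜 n μ B) := by
  have h := RingQuot.mkAlgHom_rel 𝕜 (sClRel.rel (𝕜 := 𝕜) (μ := μ) (B := B) i j)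
  simpa [sClGen, map_add, map_mul, map_smul, map_one] using h

lemma sCl_gen_sq (hchar : (2 : 𝕜) ≠ 0) (hμ : MulAntisym μ) (i : Fin n) :
    sClGen 𝕜 n μ B i * sClGen 𝕜 n μ B i = B i i • (1 : sCl 𝕜 n μ B) := by
  have h := sCl_rel μ B i i
  rw [(hμ i i).2, one_smul] at h
  have h2 : (2 : 𝕜) • (sClGen 𝕜 n μ B i * sClGen 𝕜 n μ B i)
      = (2 : 𝕜) • (B i i • (1 : sCl 𝕜 n μ B)) := by
    rw [two_smul, h, smul_smul]
  have := congrArg (fun z => (2 : 𝕜)⁻¹ • z) h2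
  simpa [smul_smul, ← mul_assoc, inv_mul_cancel₀ hchar] using this

lemma sClMon_of_sorted {l : List (Fin n)} (hl : l.Pairwise (· < ·)) :
    sClMon μ B l.toFinset = (l.map (sClGen 𝕜 n μ B)).prod := by
  rw [sClMon, (List.toFinset_sort (· ≤ ·) hl.nodup).2 (hl.imp le_of_lt)]

lemma sClMon_insert {j : Fin n} {s : Finset (Fin n)} (h : ∀ b ∈ s, j < b) :
    sClMon μ B (insert j s) = sClGen 𝕜 n μ B j * sClMon μ B s := by
  have hj : j ∉ s := fun hjs => lt_irrefl j (h j hjs)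
  rw [sClMon, Finset.sort_insert (· ≤ ·) (fun b hb => (h b hb).le) hj]
  simp [sClMon]

lemma sCl_straighten (hchar : (2 : 𝕜) ≠ 0) (hμ : MulAntisym μ) :
    ∀ (l : List (Fin n)), l.Pairwise (· < ·) → ∀ i : Fin n,
      sClGen 𝕜 n μ B i * (l.map (sClGen 𝕜 n μ B)).prod ∈
        Submodule.span 𝕜 (sClMon μ B '' {s : Finset (Fin n) | s ⊆ insert i l.toFinset}) := by
  intro l
  induction l with
  | nil =>
      intro _ i
      refine Submodule.subset_span ⟨{i}, by simp, ?_⟩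
      simp [sClMon, Finset.sort_singleton]
  | cons j t IH =>
      intro hsort i
      rw [List.pairwise_cons] at hsort
      obtain ⟨hjt, ht⟩ := hsort
      have hft : (t.map (sClGen 𝕜 n μ B)).prod = sClMon μ B t.toFinset :=
        (sClMon_of_sorted μ B ht).symm
      rcases lt_trichotomy i j with hij | rfl | hij
      · -- i < j : the product is already a sorted monomial
        have hsorted : (i :: j :: t).Pairwise (· < ·) := by
          rw [List.pairwise_cons]
          exact ⟨fun b hb => by
            rcases List.mem_cons.1 hb with rfl | hb
            · exact hij
            · exact hij.trans (hjt b hb), by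
              rw [List.pairwise_cons]; exact ⟨hjt, ht⟩⟩
        refine Submodule.subset_span ⟨(i :: j :: t).toFinset, ?_, ?_⟩
        · intro b hb; simp at hb ⊢; tauto
        · rw [sClMon_of_sorted μ B hsorted]; simp [mul_assoc]
      · -- i = j : use x̄ᵢ² = Bᵢᵢ • 1
        have : sClGen 𝕜 n μ B i * ((i :: t).map (sClGen 𝕜 n μ B)).prod
            = B i i • sClMon μ B t.toFinset := by
          simp only [List.map_cons, List.prod_cons, ← mul_assoc,
            sCl_gen_sq μ B hchar hμ, hft, smul_mul_assoc, one_mul]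
        rw [this]
        refine Submodule.smul_mem _ _ (Submodule.subset_span ⟨t.toFinset, ?_, rfl⟩)
        intro b hb; simp at hb ⊢; tauto
      · -- j < i : straighten using the relation
        have hrel : sClGen 𝕜 n μ B i * sClGen 𝕜 n μ B j
            = (2 * B i j) • (1 : sCl 𝕜 n μ B)
              - μ i j • (sClGen 𝕜 n μ B j * sClGen 𝕜 n μ B i) :=
          eq_sub_of_add_eq (sCl_rel μ B i j)
        have key : sClGen 𝕜 n μ B i * ((j :: t).map (sClGen 𝕜 n μ B)).prod
            = (2 * B i j) • (t.map (sClGen 𝕜 n μ B)).prod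
              - μ i j • (sClGen 𝕜 n μ B j *
                  (sClGen 𝕜 n μ B i * (t.map (sClGen 𝕜 n μ B)).prod)) := by
          simp only [List.map_cons, List.prod_cons, ← mul_assoc, hrel]
          rw [sub_mul, smul_mul_assoc, smul_mul_assoc, one_mul, mul_assoc]
        rw [key]
        refine Submodule.sub_mem _ ?_ (Submodule.smul_mem _ _ ?_)
        · refine Submodule.smul_mem _ _ (Submodule.subset_span ⟨t.toFinset, ?_, hft.symm⟩)
          intro b hb; simp at hb ⊢; tauto
        · -- x̄ᵢ ⬝ (product of t) lies in the span indexed by subsets of insert i t.toFinset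
          have h1 := IH ht i
          have h2 : sClGen 𝕜 n μ B j * (sClGen 𝕜 n μ B i * (t.map (sClGen 𝕜 n μ B)).prod)
              ∈ Submodule.map (LinearMap.mulLeft 𝕜 (sClGen 𝕜 n μ B j))
                  (Submodule.span 𝕜
                    (sClMon μ B '' {s : Finset (Fin n) | s ⊆ insert i t.toFinset})) :=
            ⟨_, h1, rfl⟩
          rw [Submodule.map_span] at h2
          refine Submodule.span_le.2 ?_ h2
          rintro _ ⟨_, ⟨s, hs, rfl⟩, rfl⟩
          have hjs : ∀ b ∈ s, j < b := by
            intro b hb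
            rcases Finset.mem_insert.1 (hs hb) with rfl | hbt
            · exact hij
            · exact hjt b (List.mem_toFinset.1 hbt)
          have : (LinearMap.mulLeft 𝕜 (sClGen 𝕜 n μ B j)) (sClMon μ B s)
              = sClMon μ B (insert j s) := by
            rw [LinearMap.mulLeft_apply, ← sClMon_insert μ B hjs]
          rw [this]
          refine Submodule.subset_span ⟨insert j s, ?_, rfl⟩
          intro b hb
          rcases Finset.mem_insert.1 hb with rfl | hbs
          · simp
          · have := hs hbs; simp at this ⊢; tauto

lemma sClMon_span_top (hchar : (2 : 𝕜) ≠ 0) (hμ : MulAntisym μ) :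
    Submodule.span 𝕜 (Set.range (sClMon μ B)) = ⊤ := by
  set M := Submodule.span 𝕜 (Set.range (sClMon μ B)) with hM
  have hone : (1 : sCl 𝕜 n μ B) ∈ M :=
    Submodule.subset_span ⟨∅, by simp [sClMon, Finset.sort_empty]⟩
  -- multiplication by a generator preserves M
  have hmul : ∀ i : Fin n, ∀ m ∈ M, sClGen 𝕜 n μ B i * m ∈ M := by
    intro i m hm
    have h2 : sClGen 𝕜 n μ B i * m
        ∈ Submodule.map (LinearMap.mulLeft 𝕜 (sClGen 𝕜 n μ B i)) M := ⟨m, hm, rfl⟩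
    rw [hM, Submodule.map_span] at h2
    refine Submodule.span_le.2 ?_ h2
    rintro _ ⟨_, ⟨s, rfl⟩, rfl⟩
    have hs : (s.sort (· ≤ ·)).Pairwise (· < ·) := (Finset.sortedLT_sort s).pairwise
    have : (LinearMap.mulLeft 𝕜 (sClGen 𝕜 n μ B i)) (sClMon μ B s)
        = sClGen 𝕜 n μ B i * ((s.sort (· ≤ ·)).map (sClGen 𝕜 n μ B)).prod := rfl
    rw [this]
    refine Submodule.span_le.2 ?_ (sCl_straighten μ B hchar hμ _ hs i)
    rintro _ ⟨s', _, rfl⟩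
    exact Submodule.subset_span ⟨s', rfl⟩
  -- every element of the submonoid generated by the generators multiplies M into M
  have hclos : ∀ x ∈ Submonoid.closure (Set.range (sClGen 𝕜 n μ B)),
      ∀ m ∈ M, x * m ∈ M := by
    intro x hx
    induction hx using Submonoid.closure_induction with
    | mem x hx => rcases hx with ⟨i, rfl⟩; exact hmul i
    | one => intro m hm; simpa using hm
    | mul x y _ _ hx hy => intro m hm; rw [mul_assoc]; exact hx _ (hy m hm)
  -- the generators generate the algebra
  have hadj : Algebra.adjoin 𝕜 (Set.range (sClGen 𝕜 n μ B)) = ⊤ := by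
    have : Set.range (sClGen 𝕜 n μ B)
        = (RingQuot.mkAlgHom 𝕜 (sClRel 𝕜 n μ B)) '' Set.range (ι 𝕜) := by
      rw [← Set.range_comp]; rfl
    rw [this, ← AlgHom.map_adjoin, FreeAlgebra.adjoin_range_ι, Algebra.map_top,
      AlgHom.range_eq_top]
    exact RingQuot.mkAlgHom_surjective 𝕜 _
  rw [eq_top_iff]
  intro x _
  have hx : x ∈ Subalgebra.toSubmodule (Algebra.adjoin 𝕜 (Set.range (sClGen 𝕜 n μ B))) := by
    rw [hadj]; trivial
  rw [Algebra.adjoin_eq_span] at hx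
  refine Submodule.span_le.2 ?_ hx
  intro y hy
  simpa using hclos y hy 1 hone

end Aux

/-- Lemma 3.1: the skew Clifford algebra is a finite-dimensional 𝕜-vector space of
dimension at most `2 ^ n`. -/
theorem skewClifford_finiteDimensional_and_finrank_le
    (𝕜 : Type*) [Field 𝕜] (hchar : (2 : 𝕜) ≠ 0) (n : ℕ) (hn : 1 ≤ n)
    (μ B : Fin n → Fin n → 𝕜) (hμ : MulAntisym μ) (hB : MuSymm μ B) :
    FiniteDimensional 𝕜 (sCl 𝕜 n μ B) ∧ Module.finrank 𝕜 (sCl 𝕜 n μ B) ≤ 2 ^ n := by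
  have hspan := sClMon_span_top μ B hchar hμ
  classical
  have hfin : FiniteDimensional 𝕜 (sCl 𝕜 n μ B) :=
    Module.finite_def.mpr ⟨Finset.univ.image (sClMon μ B), by
      rw [Finset.coe_image, Finset.coe_univ, Set.image_univ]; exact hspan⟩
  refine ⟨hfin, ?_⟩
  have h1 : Module.finrank 𝕜 (sCl 𝕜 n μ B)
      = Module.finrank 𝕜 (Submodule.span 𝕜 (Set.range (sClMon μ B))) := by
    rw [hspan, finrank_top]
  rw [h1]
  calc Module.finrank 𝕜 (Submodule.span 𝕜 (Set.range (sClMon μ B)))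
      ≤ (Set.range (sClMon μ B)).toFinset.card := finrank_span_le_card _
    _ ≤ Fintype.card (Finset (Fin n)) := by
        rw [Set.toFinset_range]
        exact (Finset.card_image_le).trans (le_of_eq (Finset.card_univ))
    _ = 2 ^ n := by simp [Fintype.card_finset]
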